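/- Let C be a Hamiltonian cycle (a cycle of length v−3) in some cycle graph of a Steiner triple system of order v. Then the STS(v) obtained by performing the cycle switch on C is isomorphic to the original system. -/
import Mathlib


/-- A Steiner triple system of order `v` on the point set `Fin v`:
a collection of 3-element blocks such that every pair of distinct points
lies in exactly one block. -/
structure STS (v : ℕ) where
  blocks : Finset (Finset (Fin v))
  card_blocks : ∀ B ∈ blocks, B.card = 3
  covers : ∀ x y : Fin v, x ≠ y → ∃! B, B ∈ blocks ∧ x ∈ B ∧ y ∈ B

/-- Isomorphism of Steiner triple systems on the same point set: a bijection of the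
points mapping the block set of one onto the block set of the other. -/
def STS.Iso {v : ℕ} (S S' : STS v) : Prop :=
  ∃ φ : Equiv.Perm (Fin v), ∀ B : Finset (Fin v), B ∈ S.blocks ↔ B.image φ ∈ S'.blocks

/-- The cycle graph `C_ab` of an STS: vertices are the points outside the block
through `a` and `b` (the remaining points are isolated vertices of this graph),
and `x`, `y` are adjacent whenever `{a,x,y}` or `{b,x,y}` is a block. -/
def STS.cycleGraph {v : ℕ} (S : STS v) (a b : Fin v) : SimpleGraph (Fin v) :=
  SimpleGraph.fromRel fun x y =>
    (∀ B ∈ S.blocks, a ∈ B → b ∈ B → x ∉ B ∧ y ∉ B) ∧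
    ((({a, x, y} : Finset (Fin v)) ∈ S.blocks) ∨ (({b, x, y} : Finset (Fin v)) ∈ S.blocks))

/-- `x 0, x 1, …, x (2k-1)` are the consecutive vertices of a cycle of length `2k`
in the cycle graph `C_ab`, listed so that the blocks through `a` occupy the
even positions and the blocks through `b` the odd positions. -/
def IsSwitchCycle {v : ℕ} (S : STS v) (a b : Fin v) (k : ℕ)
    (x : ZMod (2 * k) → Fin v) : Prop :=
  2 ≤ k ∧ a ≠ b ∧ Function.Injective x ∧
  (∀ i : ZMod (2 * k), (S.cycleGraph a b).Adj (x i) (x (i + 1))) ∧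
  (∀ j : Fin k,
    (({a, x ((2 * (j : ℕ) : ℕ)), x ((2 * (j : ℕ) + 1 : ℕ))} : Finset (Fin v)) ∈ S.blocks) ∧
    (({b, x ((2 * (j : ℕ) + 1 : ℕ)), x ((2 * (j : ℕ) + 2 : ℕ))} : Finset (Fin v)) ∈ S.blocks))

/-- The `2k` blocks of the STS corresponding to the cycle with consecutive
vertices `x 0, …, x (2k-1)` in the cycle graph `C_ab`. -/
def removedBlocks {v : ℕ} (a b : Fin v) (k : ℕ)
    (x : ZMod (2 * k) → Fin v) : Finset (Finset (Fin v)) :=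
  (Finset.univ.image fun j : Fin k =>
    ({a, x ((2 * (j : ℕ) : ℕ)), x ((2 * (j : ℕ) + 1 : ℕ))} : Finset (Fin v))) ∪
  (Finset.univ.image fun j : Fin k =>
    ({b, x ((2 * (j : ℕ) + 1 : ℕ)), x ((2 * (j : ℕ) + 2 : ℕ))} : Finset (Fin v)))

/-- The block set obtained from `S` by the cycle switch on the cycle
`x 0, …, x (2k-1)` of `C_ab`: the `2k` cycle blocks are removed and replaced
by the blocks obtained from them by exchanging the roles of `a` and `b`. -/
def switchedBlocks {v : ℕ} (S : STS v) (a b : Fin v) (k : ℕ)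
    (x : ZMod (2 * k) → Fin v) : Finset (Finset (Fin v)) :=
  (S.blocks \ removedBlocks a b k x) ∪
    (removedBlocks a b k x).image (Finset.image (Equiv.swap a b))

/-- `S'` is obtained from `S` by a single cycle switch of a cycle whose length lies
in the set `C`. -/
def SwitchStep {v : ℕ} (C : Set ℕ) (S S' : STS v) : Prop :=
  ∃ (a b : Fin v) (k : ℕ) (x : ZMod (2 * k) → Fin v),
    2 * k ∈ C ∧ IsSwitchCycle S a b k x ∧ S'.blocks = switchedBlocks S a b k x

/-- The switching graph `Sw_C(v)`: vertices are the isomorphism classes of `STS(v)`s,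
with an edge between two (distinct) classes whenever some system in one class is
transformed by a single cycle switch, of a cycle whose length lies in `C`, into a
system in the other class. -/
def SwGraph (v : ℕ) (C : Set ℕ) : SimpleGraph (Quot (@STS.Iso v)) :=
  SimpleGraph.fromRel fun q q' =>
    ∃ S S' : STS v, Quot.mk _ S = q ∧ Quot.mk _ S' = q' ∧ SwitchStep C S S'

/-- The STS `S` contains a cycle of length `n`, i.e. some cycle graph of `S`
has a cycle of length `n`. -/
def STS.HasCycle {v : ℕ} (S : STS v) (n : ℕ) : Prop :=
  ∃ a b : Fin v, a ≠ b ∧ ∃ (z : Fin v) (w : (S.cycleGraph a b).Walk z z),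
    w.IsCycle ∧ w.length = n

/-- `W` is the vertex set of a cycle of length `n` in the cycle graph `C_ab`. -/
def CycleOn {v : ℕ} (S : STS v) (a b : Fin v) (n : ℕ) (W : Finset (Fin v)) : Prop :=
  W.card = n ∧ ∃ z ∈ W, ∃ w : (S.cycleGraph a b).Walk z z,
    w.IsCycle ∧ w.length = n ∧ ∀ u : Fin v, u ∈ w.support ↔ u ∈ W

/-- The number of cycles of length `n` in the STS `S`: a cycle is recorded as a pair
consisting of the (unordered) pair `{a,b}` of points and the vertex set of the cycle
in `C_ab`. -/
noncomputable def STS.numCycles {v : ℕ} (S : STS v) (n : ℕ) : ℕ :=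
  Nat.card {p : Finset (Fin v) × Finset (Fin v) //
    ∃ a b : Fin v, a ≠ b ∧ p.1 = {a, b} ∧ CycleOn S a b n p.2}

/-- The cycle graph `C_ab` decomposes as the disjoint union of cycles whose vertex
sets are listed in `Ws` and whose lengths are given by the list `L`. -/
def CycleStructure {v : ℕ} (S : STS v) (a b : Fin v) (L : List ℕ) : Prop :=
  ∃ Ws : List (Finset (Fin v)),
    Ws.map Finset.card = L ∧ List.Pairwise Disjoint Ws ∧
    (∀ W ∈ Ws, CycleOn S a b W.card W) ∧
    (∀ z : Fin v, (∀ B ∈ S.blocks, a ∈ B → b ∈ B → z ∉ B) ↔ ∃ W ∈ Ws, z ∈ W)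

/-- The six points `a,…,f` carry a Pasch configuration of `S`, with blocks
`{a,b,c}, {a,d,e}, {b,e,f}, {c,d,f}`. -/
def PaschQuad {v : ℕ} (S : STS v) (a b c d e f : Fin v) : Prop :=
  ({a, b, c, d, e, f} : Finset (Fin v)).card = 6 ∧
  ({a, b, c} : Finset (Fin v)) ∈ S.blocks ∧ ({a, d, e} : Finset (Fin v)) ∈ S.blocks ∧
  ({b, e, f} : Finset (Fin v)) ∈ S.blocks ∧ ({c, d, f} : Finset (Fin v)) ∈ S.blocks

/-- `S` contains a Pasch configuration. -/
def STS.HasPasch {v : ℕ} (S : STS v) : Prop :=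
  ∃ a b c d e f : Fin v, PaschQuad S a b c d e f

/-- `P` is (the block set of) a Pasch configuration of `S`. -/
def IsPaschConfig {v : ℕ} (S : STS v) (P : Finset (Finset (Fin v))) : Prop :=
  ∃ a b c d e f : Fin v, PaschQuad S a b c d e f ∧
    P = {({a, b, c} : Finset (Fin v)), {a, d, e}, {b, e, f}, {c, d, f}}

/-- The block set obtained from `S` by switching the Pasch configuration
`{a,b,c}, {a,d,e}, {b,e,f}, {c,d,f}`: its four blocks are replaced by the unique
other set of four blocks on the same six points covering the same pairs. -/
def paschSwitched {v : ℕ} (S : STS v) (a b c d e f : Fin v) : Finset (Finset (Fin v)) :=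
  (S.blocks \ {({a, b, c} : Finset (Fin v)), {a, d, e}, {b, e, f}, {c, d, f}}) ∪
    {({a, b, e} : Finset (Fin v)), {a, c, d}, {b, c, f}, {d, e, f}}

/-- `S` and `S'` are twin systems: they are non-isomorphic, each contains exactly one
Pasch configuration, and switching this unique Pasch configuration in each system
yields a system isomorphic to the other. -/
def IsTwinPair {v : ℕ} (S S' : STS v) : Prop :=
  ¬ S.Iso S' ∧
  (∃! P, IsPaschConfig S P) ∧ (∃! P, IsPaschConfig S' P) ∧
  (∀ a b c d e f : Fin v, PaschQuad S a b c d e f →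
    ∃ T : STS v, T.blocks = paschSwitched S a b c d e f ∧ T.Iso S') ∧
  (∀ a b c d e f : Fin v, PaschQuad S' a b c d e f →
    ∃ T : STS v, T.blocks = paschSwitched S' a b c d e f ∧ T.Iso S)

/-- The isomorphism classes `q` and `q'` are the classes of a pair of twin systems. -/
def QTwin {v : ℕ} (q q' : Quot (@STS.Iso v)) : Prop :=
  ∃ S S' : STS v, Quot.mk _ S = q ∧ Quot.mk _ S' = q' ∧ IsTwinPair S S'

/-- Switching a Hamiltonian cycle (a cycle of length `v - 3`) in some
cycle graph of a Steiner triple system of order `v` yields a system isomorphic to the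
original one. -/
theorem switch_hamiltonian_iso {v : ℕ} (S T : STS v) (a b : Fin v) (k : ℕ)
    (x : ZMod (2 * k) → Fin v) (hx : IsSwitchCycle S a b k x) (hham : 2 * k = v - 3)
    (hT : T.blocks = switchedBlocks S a b k x) :
    T.Iso S := by
  obtain ⟨hk, hab, hinj, hadj, hblk⟩ := hx
  haveI : NeZero (2 * k) := ⟨by omega⟩
  obtain ⟨B0, ⟨hB0S, haB0, hbB0⟩, hB0uniq⟩ := S.covers a b hab
  have hv : 7 ≤ v := by
    have h3 : B0.card = 3 := S.card_blocks B0 hB0S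
    have : B0 ⊆ Finset.univ := Finset.subset_univ _
    have hle := Finset.card_le_card this
    simp only [Finset.card_univ, Fintype.card_fin] at hle
    omega
  have hxB0 : ∀ i, x i ∉ B0 := by
    intro i
    have h := hadj i
    rw [STS.cycleGraph, SimpleGraph.fromRel_adj] at h
    obtain ⟨hne, h | h⟩ := h
    · exact (h.1 B0 hB0S haB0 hbB0).1
    · exact (h.1 B0 hB0S haB0 hbB0).2
  have hsurj : ∀ y : Fin v, y ∉ B0 → ∃ i, x i = y := by
    have hcard : (Finset.univ.image x).card = 2 * k := by
      rw [Finset.card_image_of_injective _ hinj, Finset.card_univ, ZMod.card]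
    have hsub : Finset.univ.image x ⊆ B0ᶜ := by
      intro y hy
      obtain ⟨i, -, rfl⟩ := Finset.mem_image.mp hy
      simpa using hxB0 i
    have hB0card : B0.card = 3 := S.card_blocks B0 hB0S
    have hcc : B0ᶜ.card = v - 3 := by
      rw [Finset.card_compl, hB0card]; simp
    have heq : Finset.univ.image x = B0ᶜ :=
      Finset.eq_of_subset_of_card_le hsub (by omega)
    intro y hy
    have : y ∈ Finset.univ.image x := by rw [heq]; simpa using hy
    obtain ⟨i, -, hi⟩ := Finset.mem_image.mp this
    exact ⟨i, hi⟩
  have huniq : ∀ (p q : Fin v), p ≠ q → ∀ B1 B2, B1 ∈ S.blocks → B2 ∈ S.blocks →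
      p ∈ B1 → q ∈ B1 → p ∈ B2 → q ∈ B2 → B1 = B2 := by
    intro p q hpq B1 B2 h1 h2 hp1 hq1 hp2 hq2
    obtain ⟨B', -, hu⟩ := S.covers p q hpq
    rw [hu B1 ⟨h1, hp1, hq1⟩, hu B2 ⟨h2, hp2, hq2⟩]
  have main1 : ∀ B ∈ S.blocks, a ∈ B → b ∉ B → B ∈ removedBlocks a b k x := by
    intro B hB haB hbB
    have hcard3 : B.card = 3 := S.card_blocks B hB
    obtain ⟨y, hyB, hya⟩ := Finset.exists_mem_ne (show 1 < B.card by omega) a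
    have hyB0 : y ∉ B0 := by
      intro hy
      have hBB0 : B = B0 := huniq a y (Ne.symm hya) B B0 hB hB0S haB hyB haB0 hy
      rw [hBB0] at hbB
      exact hbB hbB0
    obtain ⟨i, hi⟩ := hsurj y hyB0
    have hnlt : i.val < 2 * k := ZMod.val_lt i
    have hicast : ((i.val : ℕ) : ZMod (2 * k)) = i := ZMod.natCast_rightInverse i
    rcases Nat.even_or_odd i.val with ⟨j, hj⟩ | ⟨j, hj⟩
    · have hjk : j < k := by omega
      have h2j : ((2 * j : ℕ) : ZMod (2 * k)) = i := by
        rw [← hicast]; congr 1; omega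
      have hblkj := (hblk ⟨j, hjk⟩).1
      simp only [Fin.val_mk] at hblkj
      have hyR : y ∈ ({a, x ((2 * j : ℕ)), x ((2 * j + 1 : ℕ))} : Finset (Fin v)) := by
        rw [h2j, hi]
        simp
      have hBeq : B = ({a, x ((2 * j : ℕ)), x ((2 * j + 1 : ℕ))} : Finset (Fin v)) :=
        huniq a y (Ne.symm hya) B _ hB hblkj haB hyB (by simp) hyR
      rw [hBeq]
      apply Finset.mem_union_left
      exact Finset.mem_image.mpr ⟨⟨j, hjk⟩, Finset.mem_univ _, rfl⟩
    · have hjk : j < k := by omega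
      have h2j : ((2 * j + 1 : ℕ) : ZMod (2 * k)) = i := by
        rw [← hicast]; congr 1; omega
      have hblkj := (hblk ⟨j, hjk⟩).1
      simp only [Fin.val_mk] at hblkj
      have hyR : y ∈ ({a, x ((2 * j : ℕ)), x ((2 * j + 1 : ℕ))} : Finset (Fin v)) := by
        rw [h2j, hi]
        simp
      have hBeq : B = ({a, x ((2 * j : ℕ)), x ((2 * j + 1 : ℕ))} : Finset (Fin v)) :=
        huniq a y (Ne.symm hya) B _ hB hblkj haB hyB (by simp) hyR
      rw [hBeq]
      apply Finset.mem_union_left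
      exact Finset.mem_image.mpr ⟨⟨j, hjk⟩, Finset.mem_univ _, rfl⟩
  have main2 : ∀ B ∈ S.blocks, b ∈ B → a ∉ B → B ∈ removedBlocks a b k x := by
    intro B hB hbB haB
    have hcard3 : B.card = 3 := S.card_blocks B hB
    obtain ⟨y, hyB, hyb⟩ := Finset.exists_mem_ne (show 1 < B.card by omega) b
    have hyB0 : y ∉ B0 := by
      intro hy
      have hBB0 : B = B0 := huniq b y (Ne.symm hyb) B B0 hB hB0S hbB hyB hbB0 hy
      rw [hBB0] at haB
      exact haB haB0
    obtain ⟨i, hi⟩ := hsurj y hyB0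
    have hnlt : i.val < 2 * k := ZMod.val_lt i
    have hicast : ((i.val : ℕ) : ZMod (2 * k)) = i := ZMod.natCast_rightInverse i
    rcases Nat.even_or_odd i.val with ⟨j, hj⟩ | ⟨j, hj⟩
    · -- even: i.val = j + j ; use j' = j-1 (or k-1 if j = 0)
      obtain ⟨j', hj'k, hcast⟩ : ∃ j' < k, ((2 * j' + 2 : ℕ) : ZMod (2 * k)) = i := by
        rcases Nat.eq_zero_or_pos j with rfl | hj0
        · refine ⟨k - 1, by omega, ?_⟩
          have h2k : (2 * (k - 1) + 2 : ℕ) = 2 * k := by omega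
          rw [h2k, ZMod.natCast_self, ← hicast]
          have : i.val = 0 := by omega
          rw [this, Nat.cast_zero]
        · refine ⟨j - 1, by omega, ?_⟩
          rw [← hicast]; congr 1; omega
      have hblkj := (hblk ⟨j', hj'k⟩).2
      simp only [Fin.val_mk] at hblkj
      have hyR : y ∈ ({b, x ((2 * j' + 1 : ℕ)), x ((2 * j' + 2 : ℕ))} : Finset (Fin v)) := by
        rw [hcast, hi]
        simp
      have hBeq : B = ({b, x ((2 * j' + 1 : ℕ)), x ((2 * j' + 2 : ℕ))} : Finset (Fin v)) :=
        huniq b y (Ne.symm hyb) B _ hB hblkj hbB hyB (by simp) hyR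
      rw [hBeq]
      apply Finset.mem_union_right
      exact Finset.mem_image.mpr ⟨⟨j', hj'k⟩, Finset.mem_univ _, rfl⟩
    · have hjk : j < k := by omega
      have h2j : ((2 * j + 1 : ℕ) : ZMod (2 * k)) = i := by
        rw [← hicast]; congr 1; omega
      have hblkj := (hblk ⟨j, hjk⟩).2
      simp only [Fin.val_mk] at hblkj
      have hyR : y ∈ ({b, x ((2 * j + 1 : ℕ)), x ((2 * j + 2 : ℕ))} : Finset (Fin v)) := by
        rw [h2j, hi]
        simp
      have hBeq : B = ({b, x ((2 * j + 1 : ℕ)), x ((2 * j + 2 : ℕ))} : Finset (Fin v)) :=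
        huniq b y (Ne.symm hyb) B _ hB hblkj hbB hyB (by simp) hyR
      rw [hBeq]
      apply Finset.mem_union_right
      exact Finset.mem_image.mpr ⟨⟨j, hjk⟩, Finset.mem_univ _, rfl⟩
  have hfix : ∀ B ∈ S.blocks, B ∉ removedBlocks a b k x →
      B.image (Equiv.swap a b) = B := by
    intro B hB hBR
    have hiff : a ∈ B ↔ b ∈ B := by
      constructor
      · intro ha; by_contra hb; exact hBR (main1 B hB ha hb)
      · intro hb; by_contra ha; exact hBR (main2 B hB hb ha)
    have hsub : B.image (Equiv.swap a b) ⊆ B := by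
      intro z hz
      obtain ⟨p, hp, rfl⟩ := Finset.mem_image.mp hz
      rcases eq_or_ne p a with rfl | hpa
      · rw [Equiv.swap_apply_left]; exact hiff.mp hp
      rcases eq_or_ne p b with rfl | hpb
      · rw [Equiv.swap_apply_right]; exact hiff.mpr hp
      · rw [Equiv.swap_apply_of_ne_of_ne hpa hpb]; exact hp
    exact Finset.eq_of_subset_of_card_le hsub
      (Finset.card_image_of_injective B (Equiv.injective _)).ge
  have hRS : removedBlocks a b k x ⊆ S.blocks := by
    intro B hB
    rcases Finset.mem_union.mp hB with h | h
    · obtain ⟨j, -, rfl⟩ := Finset.mem_image.mp h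
      exact (hblk j).1
    · obtain ⟨j, -, rfl⟩ := Finset.mem_image.mp h
      exact (hblk j).2
  have hσσ : ∀ B : Finset (Fin v),
      (B.image (Equiv.swap a b)).image (Equiv.swap a b) = B := by
    intro B
    rw [Finset.image_image]
    have : (Equiv.swap a b) ∘ (Equiv.swap a b) = id := by
      funext z; simp [Function.comp, Equiv.swap_apply_self]
    rw [this, Finset.image_id]
  have hTeq : T.blocks = S.blocks.image (Finset.image (Equiv.swap a b)) := by
    rw [hT]
    ext B
    simp only [switchedBlocks, Finset.mem_union, Finset.mem_sdiff, Finset.mem_image]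
    constructor
    · rintro (⟨hBS, hBR⟩ | ⟨B', hB'R, rfl⟩)
      · exact ⟨B, hBS, hfix B hBS hBR⟩
      · exact ⟨B', hRS hB'R, rfl⟩
    · rintro ⟨B', hB'S, rfl⟩
      by_cases hB'R : B' ∈ removedBlocks a b k x
      · exact Or.inr ⟨B', hB'R, rfl⟩
      · refine Or.inl ⟨?_, ?_⟩
        · rw [hfix B' hB'S hB'R]; exact hB'S
        · rw [hfix B' hB'S hB'R]; exact hB'R
  refine ⟨Equiv.swap a b, fun B => ?_⟩
  rw [hTeq]
  constructor
  · intro h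
    obtain ⟨B', hB', rfl⟩ := Finset.mem_image.mp h
    rw [hσσ]; exact hB'
  · intro h
    exact Finset.mem_image.mpr ⟨B.image (Equiv.swap a b), h, hσσ B⟩
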